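/- For every integer d ≥ 2 there exist an integer d′ and a Kraus family E_1,…,E_n of d′×(2d) complex matrices with ∑_k E_k†E_k = I_{2d}, in which every E_k has rank at most one (so the channel E is entanglement-breaking), such that: (a) for every m ≥ 1 and all unit vectors ψ, φ ∈ (ℂ^{2d})^{⊗m}, tr[E^{⊗m}(|ψ⟩⟨ψ|)·E^{⊗m}(|φ⟩⟨φ|)] ≠ 0 (hence C^{(0)}(E) = 0); and (b) there exist d unit vectors v_1,…,v_d ∈ ℂ²⊗ℂ^{2d} such that tr[(id₂⊗E)(|v_i⟩⟨v_i|)·(id₂⊗E)(|v_j⟩⟨v_j|)] = 0 whenever i ≠ j, where id₂⊗E is the channel with Kraus operators {I₂ ⊗ E_k} (hence C^{(0)}(id₂⊗E) ≥ log₂ d while C^{(0)}(id₂) + C^{(0)}(E) = 1). -/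

import Mathlib

open Matrix Kronecker

/-- The quantum channel associated with a Kraus family: `ρ ↦ ∑ k, E k * ρ * (E k)ᴴ`. -/
noncomputable def channelApply {ι m n : Type*} [Fintype ι] [Fintype m] [Fintype n]
    (E : ι → Matrix m n ℂ) (ρ : Matrix n n ℂ) : Matrix m m ℂ :=
  ∑ k, E k * ρ * (E k)ᴴ

/-- The `m`-fold Kronecker tensor power of a Kraus family. -/
noncomputable def krausPow {n d d' : ℕ} (E : Fin n → Matrix (Fin d') (Fin d) ℂ) (m : ℕ) :
    (Fin m → Fin n) → Matrix (Fin m → Fin d') (Fin m → Fin d) ℂ :=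
  fun f => Matrix.of fun r c => ∏ i, E (f i) (r i) (c i)

namespace Stmt12Proof

open Matrix

noncomputable def χR : Fin 4 → Fin 2 → ℝ := ![![1,0],![0,1],![1,1],![1,-1]]
def perp4 : Fin 4 → Fin 4 := ![1,0,3,2]
noncomputable def wR : Fin 4 → ℝ := ![1/2,1/2,1/4,1/4]

lemma perp4_ne (ℓ : Fin 4) : perp4 ℓ ≠ ℓ := by fin_cases ℓ <;> simp [perp4]
lemma ne_perp4 (ℓ : Fin 4) : ℓ ≠ perp4 ℓ := fun h => perp4_ne ℓ h.symm
lemma perp4_eq_iff {a b : Fin 4} : a = perp4 b ↔ b = perp4 a := by revert a b; decide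
lemma perp4_inj_iff {a b : Fin 4} : perp4 a = perp4 b ↔ a = b := by revert a b; decide
lemma wR_ge (ℓ : Fin 4) : 3/32 ≤ wR ℓ := by fin_cases ℓ <;> norm_num [wR]

lemma chiW (t t' : Fin 2) :
    ∑ ℓ : Fin 4, wR ℓ * (χR ℓ t * χR ℓ t') = if t = t' then (1:ℝ) else 0 := by
  fin_cases t <;> fin_cases t' <;>
    norm_num [Fin.sum_univ_four, wR, χR, Matrix.vecHead, Matrix.vecTail] <;> simp [Matrix.cons_val] <;> norm_num

lemma chi_perp (ℓ : Fin 4) : ∑ s : Fin 2, χR ℓ s * χR (perp4 ℓ) s = 0 := by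
  fin_cases ℓ <;>
    norm_num [Fin.sum_univ_two, perp4, χR, Matrix.vecHead, Matrix.vecTail] <;> simp [Matrix.cons_val]

lemma det_ne {ℓ₁ ℓ₂ : Fin 4} (h : ℓ₁ ≠ ℓ₂) :
    χR ℓ₁ 0 * χR ℓ₂ 1 - χR ℓ₁ 1 * χR ℓ₂ 0 ≠ 0 := by
  fin_cases ℓ₁ <;> fin_cases ℓ₂ <;>
    simp_all [χR, Matrix.vecHead, Matrix.vecTail] <;> norm_num
lemma wR_pos (ℓ : Fin 4) : 0 < wR ℓ := by fin_cases ℓ <;> norm_num [wR]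

abbrev Om (d : ℕ) := (Fin d × Fin 4) ⊕ (Fin d ⊕ (Fin d × Fin d × Fin 4))

noncomputable def aR (ℓ : Fin 4) : ℝ := Real.sqrt (wR ℓ - 3/32)
noncomputable def tR (d : ℕ) : ℝ := Real.sqrt ((64*d : ℝ)⁻¹)

lemma tR_sq (d : ℕ) : tR d * tR d = (64*d : ℝ)⁻¹ := by
  rw [tR, Real.mul_self_sqrt (by positivity : (0:ℝ) ≤ (64*(d:ℝ))⁻¹)]

lemma tR_sq_pos {d : ℕ} (hd : 0 < d) : 0 < tR d * tR d := by
  rw [tR_sq]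
  have : (0:ℝ) < 64*d := by positivity
  positivity

lemma aR_sq (ℓ : Fin 4) : aR ℓ * aR ℓ = wR ℓ - 3/32 := by
  rw [aR, Real.mul_self_sqrt (by linarith [wR_ge ℓ])]

noncomputable def gR (d : ℕ) (q : Fin d × Fin 4) : Om d → ℝ
  | Sum.inl p => if p = q then aR q.2 else 0
  | Sum.inr (Sum.inl c) => if c = q.1 then 1/4 else 0
  | Sum.inr (Sum.inr (c₁, c₂, ℓ)) =>
      (if c₁ = q.1 ∧ ℓ = q.2 then tR d else 0) +
        (if c₂ = q.1 ∧ ℓ = perp4 q.2 then tR d else 0)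

noncomputable def HgR (d : ℕ) (q q' : Fin d × Fin 4) : ℝ :=
  ∑ ω : Om d, gR d q ω * gR d q' ω

section sumC
variable {d : ℕ}

lemma sumC1 (t : ℝ) (A A' : Fin d) (B B' : Fin 4) :
    ∑ a : Fin d × Fin d × Fin 4,
      (if a.1 = A ∧ a.2.2 = B then t else 0) * (if a.1 = A' ∧ a.2.2 = B' then t else 0)
    = if A = A' ∧ B = B' then d * (t * t) else 0 := by
  simp only [ite_zero_mul_ite_zero, Fintype.sum_prod_type]
  simp only [ite_and, Finset.sum_ite_eq', Finset.mem_univ, if_true]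
  by_cases h1 : A = A' <;> by_cases h2 : B = B' <;>
    simp [h1, h2, Finset.sum_ite_eq', eq_comm, Finset.sum_comm (γ := Fin 4)]

lemma sumC2 (t : ℝ) (A A' : Fin d) (B B' : Fin 4) :
    ∑ a : Fin d × Fin d × Fin 4,
      (if a.1 = A ∧ a.2.2 = B then t else 0) * (if a.2.1 = A' ∧ a.2.2 = B' then t else 0)
    = if B = B' then t * t else 0 := by
  simp only [ite_zero_mul_ite_zero, Fintype.sum_prod_type]
  simp only [ite_and, Finset.sum_ite_eq', Finset.mem_univ, if_true]
  by_cases h2 : B = B' <;> simp [h2, Finset.sum_ite_eq', eq_comm]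

lemma sumC3 (t : ℝ) (A A' : Fin d) (B B' : Fin 4) :
    ∑ a : Fin d × Fin d × Fin 4,
      (if a.2.1 = A ∧ a.2.2 = B then t else 0) * (if a.1 = A' ∧ a.2.2 = B' then t else 0)
    = if B = B' then t * t else 0 := by
  simp only [ite_zero_mul_ite_zero, Fintype.sum_prod_type]
  simp only [ite_and, Finset.sum_ite_eq', Finset.mem_univ, if_true]
  by_cases h2 : B = B' <;> simp [h2, Finset.sum_ite_eq', eq_comm]

lemma sumC4 (t : ℝ) (A A' : Fin d) (B B' : Fin 4) :
    ∑ a : Fin d × Fin d × Fin 4,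
      (if a.2.1 = A ∧ a.2.2 = B then t else 0) * (if a.2.1 = A' ∧ a.2.2 = B' then t else 0)
    = if A = A' ∧ B = B' then d * (t * t) else 0 := by
  simp only [ite_zero_mul_ite_zero, Fintype.sum_prod_type]
  simp only [ite_and, Finset.sum_ite_eq', Finset.mem_univ, if_true]
  by_cases h1 : A = A' <;> by_cases h2 : B = B' <;>
    simp [h1, h2, Finset.sum_ite_eq', eq_comm]

end sumC

lemma HgR_expand (d : ℕ) (q q' : Fin d × Fin 4) :
    HgR d q q' =
      (if q = q' then aR q.2 * aR q'.2 else 0)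
      + ((if q.1 = q'.1 then (1/4 : ℝ) * (1/4) else 0)
      + (((if q.1 = q'.1 ∧ q.2 = q'.2 then d * (tR d * tR d) else 0)
          + (if q.1 = q'.1 ∧ q.2 = q'.2 then d * (tR d * tR d) else 0))
        + ((if q.2 = perp4 q'.2 then tR d * tR d else 0)
          + (if perp4 q.2 = q'.2 then tR d * tR d else 0)))) := by
  classical
  rw [HgR, Fintype.sum_sum_type, Fintype.sum_sum_type]
  congr 1
  · simp [gR, ite_mul, zero_mul, mul_ite, mul_zero, Finset.sum_ite_eq', eq_comm]
  congr 1
  · simp [gR, ite_mul, zero_mul, mul_ite, mul_zero, Finset.sum_ite_eq', eq_comm]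
  · have expand : ∀ a : Fin d × Fin d × Fin 4,
        gR d q (Sum.inr (Sum.inr a)) * gR d q' (Sum.inr (Sum.inr a)) =
        (if a.1 = q.1 ∧ a.2.2 = q.2 then tR d else 0) *
            (if a.1 = q'.1 ∧ a.2.2 = q'.2 then tR d else 0)
        + ((if a.1 = q.1 ∧ a.2.2 = q.2 then tR d else 0) *
            (if a.2.1 = q'.1 ∧ a.2.2 = perp4 q'.2 then tR d else 0)
        + ((if a.2.1 = q.1 ∧ a.2.2 = perp4 q.2 then tR d else 0) *
            (if a.1 = q'.1 ∧ a.2.2 = q'.2 then tR d else 0)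
        + (if a.2.1 = q.1 ∧ a.2.2 = perp4 q.2 then tR d else 0) *
            (if a.2.1 = q'.1 ∧ a.2.2 = perp4 q'.2 then tR d else 0))) := by
      rintro ⟨c₁, c₂, ℓ⟩
      show (_ + _) * (_ + _) = _
      ring
    rw [Finset.sum_congr rfl (fun a _ => expand a)]
    rw [Finset.sum_add_distrib, Finset.sum_add_distrib, Finset.sum_add_distrib]
    rw [sumC1, sumC2, sumC3, sumC4]
    simp only [perp4_inj_iff]
    ring

lemma HgR_diag {d : ℕ} (hd : 0 < d) (q : Fin d × Fin 4) : HgR d q q = wR q.2 := by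
  rw [HgR_expand]
  have hd' : (d : ℝ) ≠ 0 := Nat.cast_ne_zero.mpr hd.ne'
  simp only [if_pos rfl, if_neg (ne_perp4 q.2), if_neg (perp4_ne q.2), and_self,
    aR_sq, tR_sq, if_true]
  field_simp
  ring

lemma HgR_same {d : ℕ} {q q' : Fin d × Fin 4} (h1 : q.1 = q'.1) (h2 : q.2 ≠ q'.2) :
    HgR d q q' = 1/16 + (if q'.2 = perp4 q.2 then 2 * (tR d * tR d) else 0) := by
  rw [HgR_expand]
  have hq : q ≠ q' := fun h => h2 (by rw [h])
  simp only [if_neg hq, if_pos h1, if_neg (fun h : q.1 = q'.1 ∧ q.2 = q'.2 => h2 h.2)]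
  by_cases hp : q'.2 = perp4 q.2
  · rw [if_pos (perp4_eq_iff.mpr hp), if_pos hp.symm, if_pos hp]
    ring
  · rw [if_neg (fun h => hp (perp4_eq_iff.mp h)), if_neg (fun h => hp h.symm), if_neg hp]
    ring

lemma HgR_cross {d : ℕ} {q q' : Fin d × Fin 4} (h1 : q.1 ≠ q'.1) :
    HgR d q q' = if q'.2 = perp4 q.2 then 2 * (tR d * tR d) else 0 := by
  rw [HgR_expand]
  have hq : q ≠ q' := fun h => h1 (by rw [h])
  simp only [if_neg hq, if_neg h1, if_neg (fun h : q.1 = q'.1 ∧ q.2 = q'.2 => h1 h.1)]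
  by_cases hp : q'.2 = perp4 q.2
  · rw [if_pos (perp4_eq_iff.mpr hp), if_pos hp.symm, if_pos hp]
    ring
  · rw [if_neg (fun h => hp (perp4_eq_iff.mp h)), if_neg (fun h => hp h.symm), if_neg hp]
    ring

def Good {d : ℕ} (q q' : Fin d × Fin 4) : Prop := q.1 = q'.1 ∨ q'.2 = perp4 q.2

lemma HgR_ne_zero {d : ℕ} (hd : 0 < d) {q q' : Fin d × Fin 4} (h : Good q q') :
    HgR d q q' ≠ 0 := by
  have ht := tR_sq_pos hd
  rcases h with h1 | h2
  · by_cases h2 : q.2 = q'.2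
    · have : q = q' := Prod.ext h1 h2
      subst this
      rw [HgR_diag hd]
      exact (wR_pos q.2).ne'
    · rw [HgR_same h1 h2]
      split_ifs <;> positivity
  · by_cases h1 : q.1 = q'.1
    · by_cases h2' : q.2 = q'.2
      · exact absurd (h2' ▸ h2) (perp4_ne q.2).symm.elim
      · rw [HgR_same h1 h2', if_pos h2]; positivity
    · rw [HgR_cross h1, if_pos h2]; positivity

lemma HgR_eq_zero {d : ℕ} {q q' : Fin d × Fin 4} (h1 : q.1 ≠ q'.1)
    (h2 : q'.2 ≠ perp4 q.2) : HgR d q q' = 0 := by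
  rw [HgR_cross h1, if_neg h2]

lemma mul_vv_mul_conjT {R C : Type*} [Fintype R] [Fintype C]
    (M N : Matrix R C ℂ) (a : C → ℂ) :
    M * vecMulVec a (star a) * Nᴴ = vecMulVec (M.mulVec a) (star (N.mulVec a)) := by
  ext i j
  simp only [Matrix.mul_apply, vecMulVec_apply, conjTranspose_apply, mulVec, dotProduct,
    Pi.star_apply, RCLike.star_def, map_sum, _root_.map_mul]
  rw [Finset.sum_mul_sum]
  simp only [Finset.sum_mul, Finset.mul_sum]
  rw [Finset.sum_comm]
  apply Finset.sum_congr rfl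
  intro x _
  apply Finset.sum_congr rfl
  intro y _
  ring

lemma trace_vv_mul_vv {R : Type*} [Fintype R] (a b : R → ℂ) :
    (vecMulVec a (star a) * vecMulVec b (star b)).trace
      = (star a ⬝ᵥ b) * (star b ⬝ᵥ a) := by
  simp only [trace, diag_apply, Matrix.mul_apply, vecMulVec_apply, dotProduct,
    Pi.star_apply, RCLike.star_def]
  rw [Finset.sum_mul_sum]
  rw [Finset.sum_comm]
  apply Finset.sum_congr rfl
  intro x _
  apply Finset.sum_congr rfl
  intro y _
  ring

lemma trace_channel_mul {ι R C : Type*} [Fintype ι] [Fintype R] [Fintype C]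
    (A : ι → Matrix R C ℂ) (ψ φ : C → ℂ) :
    (channelApply A (vecMulVec ψ (star ψ)) * channelApply A (vecMulVec φ (star φ))).trace
      = ∑ k, ∑ l, (star ((A k).mulVec ψ) ⬝ᵥ ((A l).mulVec φ))
          * (star ((A l).mulVec φ) ⬝ᵥ ((A k).mulVec ψ)) := by
  rw [channelApply, channelApply, Finset.sum_mul_sum, trace_sum]
  apply Finset.sum_congr rfl
  intro k _
  rw [trace_sum]
  apply Finset.sum_congr rfl
  intro l _
  rw [mul_vv_mul_conjT (A k) (A k) ψ, mul_vv_mul_conjT (A l) (A l) φ, trace_vv_mul_vv]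

lemma star_dot_conj {R : Type*} [Fintype R] (a b : R → ℂ) :
    star b ⬝ᵥ a = (starRingEnd ℂ) (star a ⬝ᵥ b) := by
  simp only [dotProduct, Pi.star_apply, RCLike.star_def, map_sum, _root_.map_mul,
    Complex.conj_conj]
  apply Finset.sum_congr rfl
  intro x _
  ring

/-! ### Kraus family -/

variable (d : ℕ)

noncomputable def dpr : ℕ := Fintype.card (Om d)

noncomputable def eOm : Om d ≃ Fin (dpr d) := Fintype.equivFin (Om d)

noncomputable def gF (q : Fin d × Fin 4) : Fin (dpr d) → ℂ :=
  fun o => ((gR d q ((eOm d).symm o) : ℝ) : ℂ)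

def enc2 : Fin 2 × Fin d ≃ Fin (2 * d) := finProdFinEquiv

noncomputable def eeR (q : Fin d × Fin 4) (p : Fin 2 × Fin d) : ℝ :=
  if p.2 = q.1 then χR q.2 p.1 else 0

noncomputable def eeC (q : Fin d × Fin 4) (x : Fin (2 * d)) : ℂ :=
  ((eeR d q ((enc2 d).symm x) : ℝ) : ℂ)

noncomputable def EE (q : Fin d × Fin 4) : Matrix (Fin (dpr d)) (Fin (2 * d)) ℂ :=
  Matrix.of fun o x => gF d q o * eeC d q x

def encK : (Fin d × Fin 4) ≃ Fin (d * 4) := finProdFinEquiv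

noncomputable def EK : Fin (d * 4) → Matrix (Fin (dpr d)) (Fin (2 * d)) ℂ :=
  fun k => EE d ((encK d).symm k)

lemma conj_gF (q : Fin d × Fin 4) (o : Fin (dpr d)) :
    (starRingEnd ℂ) (gF d q o) = gF d q o := Complex.conj_ofReal _

lemma conj_eeC (q : Fin d × Fin 4) (x : Fin (2 * d)) :
    (starRingEnd ℂ) (eeC d q x) = eeC d q x := Complex.conj_ofReal _

lemma sum_gF (q q' : Fin d × Fin 4) :
    ∑ o, gF d q o * gF d q' o = ((HgR d q q' : ℝ) : ℂ) := by
  rw [HgR]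
  rw [← Equiv.sum_comp (eOm d).symm (fun ω => gR d q ω * gR d q' ω)]
  push_cast
  rfl

/-! ### Completeness -/

lemma EHE (q : Fin d × Fin 4) (x y : Fin (2 * d)) :
    ((EE d q)ᴴ * EE d q) x y = eeC d q x * eeC d q y * ((HgR d q q : ℝ) : ℂ) := by
  simp only [Matrix.mul_apply, conjTranspose_apply, EE, Matrix.of_apply, star_mul',
    RCLike.star_def, conj_gF, conj_eeC]
  rw [← sum_gF, Finset.mul_sum]
  apply Finset.sum_congr rfl
  intro o _
  ring

lemma completeness (hd : 0 < d) : ∑ k, (EK d k)ᴴ * EK d k = 1 := by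
  have h1 : ∑ k, (EK d k)ᴴ * EK d k = ∑ q : Fin d × Fin 4, (EE d q)ᴴ * EE d q :=
    Equiv.sum_comp (encK d).symm (fun q => (EE d q)ᴴ * EE d q)
  rw [h1]
  ext x y
  rw [Matrix.sum_apply]
  simp only [EHE, HgR_diag hd]
  have key : ∀ p p' : Fin 2 × Fin d,
      ∑ q : Fin d × Fin 4, ((eeR d q p : ℝ) : ℂ) * ((eeR d q p' : ℝ) : ℂ) * ((wR q.2 : ℝ) : ℂ)
        = if p = p' then 1 else 0 := by
    intro p p'
    have : ∀ q : Fin d × Fin 4,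
        ((eeR d q p : ℝ) : ℂ) * ((eeR d q p' : ℝ) : ℂ) * ((wR q.2 : ℝ) : ℂ)
          = ((if p.2 = q.1 then (1:ℝ) else 0) * (if p'.2 = q.1 then (1:ℝ) else 0)
              * (wR q.2 * (χR q.2 p.1 * χR q.2 p'.1)) : ℝ) := by
      intro q
      rw [eeR, eeR]
      split_ifs <;> push_cast <;> ring
    rw [Finset.sum_congr rfl (fun q _ => this q)]
    rw [← Complex.ofReal_sum]
    rw [Fintype.sum_prod_type]
    simp only [ite_zero_mul_ite_zero, one_mul, ite_zero_mul, Finset.sum_ite_eq,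
      Finset.mem_univ, if_true]
    rw [Finset.sum_comm]
    simp only [Finset.sum_ite_eq, Finset.mem_univ, if_true]
    by_cases hpc : p'.2 = p.2
    · simp only [hpc, if_pos rfl, if_true]
      rw [chiW]
      by_cases hp1 : p.1 = p'.1
      · rw [if_pos hp1, if_pos (Prod.ext hp1 hpc.symm)]
        norm_num
      · rw [if_neg hp1, if_neg (fun h => hp1 (congrArg Prod.fst h))]
        norm_num
    · simp only [if_neg hpc, Finset.sum_const_zero, Complex.ofReal_zero,
        if_neg (fun h : p = p' => hpc (congrArg Prod.snd h).symm)]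
  simp only [eeC]
  rw [key ((enc2 d).symm x) ((enc2 d).symm y)]
  rw [Matrix.one_apply]
  by_cases hxy : x = y
  · rw [if_pos hxy, if_pos (by rw [hxy])]
  · rw [if_neg hxy, if_neg (fun h => hxy ((Equiv.injective (enc2 d).symm) h))]

/-! ### Rank -/

lemma rank_EE (q : Fin d × Fin 4) : (EE d q).rank ≤ 1 := by
  have : EE d q = vecMulVec (gF d q) (eeC d q) := rfl
  rw [this, vecMulVec_eq (Fin 1)]
  refine le_trans (Matrix.rank_mul_le_left _ _) ?_
  exact (Matrix.rank_le_card_width (Matrix.replicateCol (Fin 1) (gF d q))).trans (by simp)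

/-! ### Part (b): the activation vectors -/

noncomputable def vv (i : Fin d) : (Fin 2 × Fin (2 * d)) → ℂ :=
  fun p => if p.2 = enc2 d (p.1, i) then (1 + Complex.I)/2 else 0

lemma conj_c_mul : (starRingEnd ℂ) ((1 + Complex.I)/2) * ((1 + Complex.I)/2) = 1/2 := by
  have h : (starRingEnd ℂ) ((1 + Complex.I)/2) = (1 - Complex.I)/2 := by
    rw [map_div₀, map_add, RingHom.map_one, Complex.conj_I, map_ofNat]
    ring
  rw [h]
  have h2 : ((1:ℂ) - Complex.I) / 2 * ((1 + Complex.I)/2) = (1 - Complex.I * Complex.I)/4 := by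
    ring
  rw [h2, Complex.I_mul_I]
  norm_num

lemma vv_unit (i : Fin d) : star (vv d i) ⬝ᵥ vv d i = 1 := by
  rw [dotProduct, Fintype.sum_prod_type]
  have : ∀ s : Fin 2, ∑ x : Fin (2*d), star (vv d i) (s, x) * vv d i (s, x) = 1/2 := by
    intro s
    have h2 : ∀ x, star (vv d i) (s, x) * vv d i (s, x)
        = if x = enc2 d (s, i) then (1:ℂ)/2 else 0 := by
      intro x
      simp only [Pi.star_apply, vv]
      split_ifs
      · exact conj_c_mul
      · simp
    rw [Finset.sum_congr rfl (fun x _ => h2 x), Finset.sum_ite_eq', if_pos (Finset.mem_univ _)]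
  rw [Finset.sum_congr rfl (fun s _ => this s)]
  rw [Fin.sum_univ_two]
  norm_num

lemma kron_mulVec (q : Fin d × Fin 4) (i : Fin d) (s : Fin 2) (o : Fin (dpr d)) :
    (((1 : Matrix (Fin 2) (Fin 2) ℂ) ⊗ₖ EE d q).mulVec (vv d i)) (s, o)
      = (1 + Complex.I)/2 * gF d q o * ((eeR d q (s, i) : ℝ) : ℂ) := by
  rw [Matrix.mulVec, dotProduct, Fintype.sum_prod_type]
  have h1 : ∀ t : Fin 2, ∑ x : Fin (2*d),
      ((1 : Matrix (Fin 2) (Fin 2) ℂ) ⊗ₖ EE d q) (s, o) (t, x) * vv d i (t, x)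
      = (1 : Matrix (Fin 2) (Fin 2) ℂ) s t * (EE d q o (enc2 d (t, i)) * ((1 + Complex.I)/2)) := by
    intro t
    have h2 : ∀ x, ((1 : Matrix (Fin 2) (Fin 2) ℂ) ⊗ₖ EE d q) (s, o) (t, x) * vv d i (t, x)
        = if x = enc2 d (t, i) then
            (1 : Matrix (Fin 2) (Fin 2) ℂ) s t * (EE d q o x * ((1 + Complex.I)/2)) else 0 := by
      intro x
      rw [Matrix.kroneckerMap_apply, vv]
      simp only []
      split_ifs <;> ring
    rw [Finset.sum_congr rfl (fun x _ => h2 x), Finset.sum_ite_eq', if_pos (Finset.mem_univ _)]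
  rw [Finset.sum_congr rfl (fun t _ => h1 t), Fin.sum_univ_two]
  by_cases hs : s = 0
  · subst hs
    simp only [Matrix.one_apply_eq, Matrix.one_apply_ne (by decide : (0 : Fin 2) ≠ 1)]
    rw [EE]
    simp only [Matrix.of_apply, eeC, Equiv.symm_apply_apply]
    ring
  · have hs1 : s = 1 := by omega
    subst hs1
    simp only [Matrix.one_apply_eq, Matrix.one_apply_ne (by decide : (1 : Fin 2) ≠ 0)]
    rw [EE]
    simp only [Matrix.of_apply, eeC, Equiv.symm_apply_apply]
    ring

lemma zeta_zero (hd : 0 < d) {i j : Fin d} (hij : i ≠ j) (q q' : Fin d × Fin 4) :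
    star (((1 : Matrix (Fin 2) (Fin 2) ℂ) ⊗ₖ EE d q).mulVec (vv d i)) ⬝ᵥ
      (((1 : Matrix (Fin 2) (Fin 2) ℂ) ⊗ₖ EE d q').mulVec (vv d j)) = 0 := by
  rw [dotProduct, Fintype.sum_prod_type]
  have h1 : ∀ s o, star (((1 : Matrix (Fin 2) (Fin 2) ℂ) ⊗ₖ EE d q).mulVec (vv d i)) (s, o)
      * (((1 : Matrix (Fin 2) (Fin 2) ℂ) ⊗ₖ EE d q').mulVec (vv d j)) (s, o)
      = ((starRingEnd ℂ) ((1 + Complex.I)/2) * ((1 + Complex.I)/2))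
        * (((eeR d q (s, i) * eeR d q' (s, j) : ℝ) : ℂ))
        * (gF d q o * gF d q' o) := by
    intro s o
    simp only [Pi.star_apply, kron_mulVec, RCLike.star_def, _root_.map_mul, conj_gF,
      Complex.conj_ofReal]
    push_cast
    ring
  simp only [h1]
  rw [← Finset.sum_mul_sum]
  rw [sum_gF]
  have factor2 : ∑ s : Fin 2, ((starRingEnd ℂ) ((1 + Complex.I)/2) * ((1 + Complex.I)/2))
      * (((eeR d q (s, i) * eeR d q' (s, j) : ℝ) : ℂ))
      = ((starRingEnd ℂ) ((1 + Complex.I)/2) * ((1 + Complex.I)/2))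
        * ((∑ s : Fin 2, eeR d q (s, i) * eeR d q' (s, j) : ℝ) : ℂ) := by
    push_cast
    rw [Finset.mul_sum]
  rw [factor2]
  by_cases hqi : q.1 = i
  · by_cases hqj : q'.1 = j
    · have hqq : q.1 ≠ q'.1 := by rw [hqi, hqj]; exact hij
      by_cases hperp : q'.2 = perp4 q.2
      · have : ∑ s : Fin 2, eeR d q (s, i) * eeR d q' (s, j) = 0 := by
          have : ∀ s : Fin 2, eeR d q (s, i) * eeR d q' (s, j) = χR q.2 s * χR (perp4 q.2) s := by
            intro s
            rw [eeR, eeR, if_pos hqi.symm, if_pos hqj.symm, hperp]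
          rw [Finset.sum_congr rfl (fun s _ => this s), chi_perp]
        rw [this]
        simp
      · rw [HgR_eq_zero hqq hperp]
        simp
    · have : ∑ s : Fin 2, eeR d q (s, i) * eeR d q' (s, j) = 0 := by
        apply Finset.sum_eq_zero
        intro s _
        have hz : eeR d q' (s, j) = 0 := by
          simp only [eeR]
          exact if_neg (fun h : j = q'.1 => hqj h.symm)
        rw [hz, mul_zero]
      rw [this]
      simp
  · have : ∑ s : Fin 2, eeR d q (s, i) * eeR d q' (s, j) = 0 := by
      apply Finset.sum_eq_zero
      intro s _
      have hz : eeR d q (s, i) = 0 := by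
        simp only [eeR]
        exact if_neg (fun h : i = q.1 => hqi h.symm)
      rw [hz, zero_mul]
    rw [this]
    simp

lemma part_b (hd : 0 < d) {i j : Fin d} (hij : i ≠ j) :
    (channelApply (fun k => (1 : Matrix (Fin 2) (Fin 2) ℂ) ⊗ₖ EK d k)
        (vecMulVec (vv d i) (star (vv d i))) *
      channelApply (fun k => (1 : Matrix (Fin 2) (Fin 2) ℂ) ⊗ₖ EK d k)
        (vecMulVec (vv d j) (star (vv d j)))).trace = 0 := by
  rw [trace_channel_mul]
  apply Finset.sum_eq_zero
  intro k _
  apply Finset.sum_eq_zero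
  intro l _
  rw [EK, EK, zeta_zero d hd hij, zero_mul]

/-! ### Part (a): tensor powers -/

noncomputable def Ff {m : ℕ} (qv : Fin m → Fin d × Fin 4)
    (ψ : (Fin m → Fin (2 * d)) → ℂ) : ℂ :=
  ∑ xv : Fin m → Fin (2 * d), (∏ i, eeC d (qv i) (xv i)) * ψ xv

noncomputable def contr {m : ℕ} (q : Fin d × Fin 4)
    (ψ : (Fin (m + 1) → Fin (2 * d)) → ℂ) : (Fin m → Fin (2 * d)) → ℂ :=
  fun s => ∑ x : Fin (2 * d), eeC d q x * ψ (Fin.cons x s)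

lemma sum_fn_succ {X M : Type*} [Fintype X] [AddCommMonoid M] (m : ℕ)
    (f : (Fin (m + 1) → X) → M) :
    ∑ xv : Fin (m + 1) → X, f xv = ∑ x : X, ∑ s : Fin m → X, f (Fin.cons x s) := by
  rw [← Equiv.sum_comp (Fin.consEquiv (fun _ => X)) f, Fintype.sum_prod_type]
  rfl

lemma Ff_zero (qv : Fin 0 → Fin d × Fin 4) (ψ : (Fin 0 → Fin (2 * d)) → ℂ) :
    Ff d qv ψ = ψ default := by
  rw [Ff, Finset.univ_unique, Finset.sum_singleton]
  simp

lemma Ff_succ {m : ℕ} (qv : Fin (m + 1) → Fin d × Fin 4)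
    (ψ : (Fin (m + 1) → Fin (2 * d)) → ℂ) :
    Ff d qv ψ = Ff d (Fin.tail qv) (contr d (qv 0) ψ) := by
  rw [Ff, sum_fn_succ, Ff]
  rw [Finset.sum_comm]
  apply Finset.sum_congr rfl
  intro s _
  rw [contr, Finset.mul_sum]
  apply Finset.sum_congr rfl
  intro x _
  rw [Fin.prod_univ_succ]
  simp only [Fin.cons_zero, Fin.cons_succ, Fin.tail]
  ring

lemma contr_apply {m : ℕ} (c : Fin d) (ℓ : Fin 4)
    (ψ : (Fin (m + 1) → Fin (2 * d)) → ℂ) (s : Fin m → Fin (2 * d)) :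
    contr d (c, ℓ) ψ s
      = ((χR ℓ 0 : ℝ) : ℂ) * ψ (Fin.cons (enc2 d (0, c)) s)
        + ((χR ℓ 1 : ℝ) : ℂ) * ψ (Fin.cons (enc2 d (1, c)) s) := by
  rw [contr]
  rw [← Equiv.sum_comp (enc2 d) (fun x => eeC d (c, ℓ) x * ψ (Fin.cons x s))]
  rw [Fintype.sum_prod_type]
  have h1 : ∀ t : Fin 2, ∑ c' : Fin d,
      eeC d (c, ℓ) (enc2 d (t, c')) * ψ (Fin.cons (enc2 d (t, c')) s)
      = ((χR ℓ t : ℝ) : ℂ) * ψ (Fin.cons (enc2 d (t, c)) s) := by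
    intro t
    have h2 : ∀ c' : Fin d, eeC d (c, ℓ) (enc2 d (t, c')) * ψ (Fin.cons (enc2 d (t, c')) s)
        = if c' = c then ((χR ℓ t : ℝ) : ℂ) * ψ (Fin.cons (enc2 d (t, c')) s) else 0 := by
      intro c'
      rw [eeC, Equiv.symm_apply_apply, eeR]
      split_ifs with h
      · rfl
      · simp
    rw [Finset.sum_congr rfl (fun c' _ => h2 c'), Finset.sum_ite_eq',
      if_pos (Finset.mem_univ _)]
  rw [Finset.sum_congr rfl (fun t _ => h1 t), Fin.sum_univ_two]

lemma not_zero_exists {α : Type*} [Fintype α] {ψ : α → ℂ} (h : ψ ≠ 0) : ∃ a, ψ a ≠ 0 := by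
  by_contra hc
  push_neg at hc
  exact h (funext fun a => hc a)

lemma survivor {m : ℕ} {ψ : (Fin (m + 1) → Fin (2 * d)) → ℂ} (h : ψ ≠ 0) :
    ∃ c : Fin d, ∀ ℓ₁ ℓ₂ : Fin 4, ℓ₁ ≠ ℓ₂ →
      contr d (c, ℓ₁) ψ ≠ 0 ∨ contr d (c, ℓ₂) ψ ≠ 0 := by
  obtain ⟨xv, hxv⟩ := not_zero_exists h
  set p := (enc2 d).symm (xv 0) with hp
  refine ⟨p.2, ?_⟩
  intro ℓ₁ ℓ₂ hne
  by_contra hcon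
  push_neg at hcon
  obtain ⟨hz1, hz2⟩ := hcon
  have hS : ∀ t : Fin 2, ∀ s, ψ (Fin.cons (enc2 d (t, p.2)) s) = 0 := by
    intro t s
    have e1 : ((χR ℓ₁ 0 : ℝ) : ℂ) * ψ (Fin.cons (enc2 d (0, p.2)) s)
        + ((χR ℓ₁ 1 : ℝ) : ℂ) * ψ (Fin.cons (enc2 d (1, p.2)) s) = 0 := by
      rw [← contr_apply]
      rw [hz1]
      rfl
    have e2 : ((χR ℓ₂ 0 : ℝ) : ℂ) * ψ (Fin.cons (enc2 d (0, p.2)) s)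
        + ((χR ℓ₂ 1 : ℝ) : ℂ) * ψ (Fin.cons (enc2 d (1, p.2)) s) = 0 := by
      rw [← contr_apply]
      rw [hz2]
      rfl
    set u := ψ (Fin.cons (enc2 d (0, p.2)) s)
    set v := ψ (Fin.cons (enc2 d (1, p.2)) s)
    have hdet : ((χR ℓ₁ 0 * χR ℓ₂ 1 - χR ℓ₁ 1 * χR ℓ₂ 0 : ℝ) : ℂ) ≠ 0 :=
      Complex.ofReal_ne_zero.mpr (det_ne hne)
    have hu : u = 0 := by
      have hcalc : ((χR ℓ₁ 0 * χR ℓ₂ 1 - χR ℓ₁ 1 * χR ℓ₂ 0 : ℝ) : ℂ) * u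
          = ((χR ℓ₂ 1 : ℝ) : ℂ) * (((χR ℓ₁ 0 : ℝ) : ℂ) * u + ((χR ℓ₁ 1 : ℝ) : ℂ) * v)
            - ((χR ℓ₁ 1 : ℝ) : ℂ) * (((χR ℓ₂ 0 : ℝ) : ℂ) * u + ((χR ℓ₂ 1 : ℝ) : ℂ) * v) := by
        push_cast
        ring
      rw [e1, e2] at hcalc
      simp only [mul_zero, sub_zero] at hcalc
      exact (mul_eq_zero.mp hcalc).resolve_left hdet
    have hv : v = 0 := by
      have hcalc : ((χR ℓ₁ 0 * χR ℓ₂ 1 - χR ℓ₁ 1 * χR ℓ₂ 0 : ℝ) : ℂ) * v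
          = ((χR ℓ₁ 0 : ℝ) : ℂ) * (((χR ℓ₂ 0 : ℝ) : ℂ) * u + ((χR ℓ₂ 1 : ℝ) : ℂ) * v)
            - ((χR ℓ₂ 0 : ℝ) : ℂ) * (((χR ℓ₁ 0 : ℝ) : ℂ) * u + ((χR ℓ₁ 1 : ℝ) : ℂ) * v) := by
        push_cast
        ring
      rw [e1, e2] at hcalc
      simp only [mul_zero, sub_zero] at hcalc
      exact (mul_eq_zero.mp hcalc).resolve_left hdet
    fin_cases t
    · exact hu
    · exact hv
  apply hxv
  have : enc2 d (p.1, p.2) = xv 0 := by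
    rw [hp]
    simp
  calc ψ xv = ψ (Fin.cons (xv 0) (Fin.tail xv)) := by rw [Fin.cons_self_tail]
    _ = ψ (Fin.cons (enc2 d (p.1, p.2)) (Fin.tail xv)) := by rw [this]
    _ = 0 := hS p.1 (Fin.tail xv)

lemma select {m : ℕ} {ψ φ : (Fin (m + 1) → Fin (2 * d)) → ℂ} {c c' : Fin d}
    (hA : ∀ ℓ₁ ℓ₂ : Fin 4, ℓ₁ ≠ ℓ₂ → contr d (c, ℓ₁) ψ ≠ 0 ∨ contr d (c, ℓ₂) ψ ≠ 0)
    (hB : ∀ ℓ₁ ℓ₂ : Fin 4, ℓ₁ ≠ ℓ₂ → contr d (c', ℓ₁) φ ≠ 0 ∨ contr d (c', ℓ₂) φ ≠ 0) :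
    ∃ ℓ ℓ' : Fin 4, Good (c, ℓ) (c', ℓ') ∧ contr d (c, ℓ) ψ ≠ 0 ∧ contr d (c', ℓ') φ ≠ 0 := by
  by_cases hcc : c = c'
  · obtain hA' := hA 0 1 (by decide)
    obtain hB' := hB 0 1 (by decide)
    obtain ⟨ℓa, ha⟩ : ∃ ℓ, contr d (c, ℓ) ψ ≠ 0 := by
      rcases hA' with h | h
      exacts [⟨0, h⟩, ⟨1, h⟩]
    obtain ⟨ℓb, hb⟩ : ∃ ℓ, contr d (c', ℓ) φ ≠ 0 := by
      rcases hB' with h | h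
      exacts [⟨0, h⟩, ⟨1, h⟩]
    exact ⟨ℓa, ℓb, Or.inl hcc, ha, hb⟩
  · by_contra hcon
    push_neg at hcon
    have hno : ∀ ℓ : Fin 4, contr d (c, ℓ) ψ = 0 ∨ contr d (c', perp4 ℓ) φ = 0 := by
      intro ℓ
      by_cases h1 : contr d (c, ℓ) ψ = 0
      · exact Or.inl h1
      · exact Or.inr (hcon ℓ (perp4 ℓ) (Or.inr rfl) h1)
    have p0 : perp4 0 = 1 := by decide
    have p1 : perp4 1 = 0 := by decide
    have p2 : perp4 2 = 3 := by decide
    rcases hno 0 with h00 | h01 <;> rcases hno 1 with h10 | h11 <;> rcases hno 2 with h20 | h21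
    · rcases hA 0 1 (by decide) with h | h
      exacts [h h00, h h10]
    · rcases hA 0 1 (by decide) with h | h
      exacts [h h00, h h10]
    · rcases hA 0 2 (by decide) with h | h
      exacts [h h00, h h20]
    · rw [p1] at h11
      rw [p2] at h21
      rcases hB 0 3 (by decide) with h | h
      exacts [h h11, h h21]
    · rw [p0] at h01
      rcases hA 1 2 (by decide) with h | h
      exacts [h h10, h h20]
    · rw [p0] at h01
      rw [p2] at h21
      rcases hB 1 3 (by decide) with h | h
      exacts [h h01, h h21]
    · rw [p0] at h01
      rw [p1] at h11
      rcases hB 1 0 (by decide) with h | h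
      exacts [h h01, h h11]
    · rw [p0] at h01
      rw [p1] at h11
      rcases hB 1 0 (by decide) with h | h
      exacts [h h01, h h11]

lemma key (m : ℕ) (ψ φ : (Fin m → Fin (2 * d)) → ℂ) (hψ : ψ ≠ 0) (hφ : φ ≠ 0) :
    ∃ qv rv : Fin m → Fin d × Fin 4,
      (∀ i, Good (qv i) (rv i)) ∧ Ff d qv ψ ≠ 0 ∧ Ff d rv φ ≠ 0 := by
  induction m with
  | zero =>
    refine ⟨fun i => i.elim0, fun i => i.elim0, fun i => i.elim0, ?_, ?_⟩
    · rw [Ff_zero]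
      intro h
      apply hψ
      funext a
      rw [Subsingleton.elim a default, h]
      rfl
    · rw [Ff_zero]
      intro h
      apply hφ
      funext a
      rw [Subsingleton.elim a default, h]
      rfl
  | succ m ih =>
    obtain ⟨c, hc⟩ := survivor d hψ
    obtain ⟨c', hc'⟩ := survivor d hφ
    obtain ⟨ℓ, ℓ', hgood, hcψ, hcφ⟩ := select d hc hc'
    obtain ⟨qv, rv, hg, h1, h2⟩ := ih (contr d (c, ℓ) ψ) (contr d (c', ℓ') φ) hcψ hcφ
    refine ⟨Fin.cons (c, ℓ) qv, Fin.cons (c', ℓ') rv, ?_, ?_, ?_⟩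
    · intro i
      refine Fin.cases ?_ ?_ i
      · simpa using hgood
      · intro i'
        simpa using hg i'
    · rw [Ff_succ]
      simpa using h1
    · rw [Ff_succ]
      simpa using h2

lemma krausPow_mulVec {m : ℕ} (kv : Fin m → Fin (d * 4)) (ψ : (Fin m → Fin (2 * d)) → ℂ)
    (rv : Fin m → Fin (dpr d)) :
    ((krausPow (EK d) m kv).mulVec ψ) rv
      = (∏ i, gF d ((encK d).symm (kv i)) (rv i))
        * Ff d (fun i => (encK d).symm (kv i)) ψ := by
  rw [Matrix.mulVec, dotProduct, Ff, Finset.mul_sum]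
  apply Finset.sum_congr rfl
  intro xv _
  rw [krausPow]
  simp only [Matrix.of_apply, EK, EE]
  rw [Finset.prod_mul_distrib]
  ring

lemma z_formula {m : ℕ} (kv lv : Fin m → Fin (d * 4))
    (ψ φ : (Fin m → Fin (2 * d)) → ℂ) :
    star ((krausPow (EK d) m kv).mulVec ψ) ⬝ᵥ ((krausPow (EK d) m lv).mulVec φ)
      = (starRingEnd ℂ) (Ff d (fun i => (encK d).symm (kv i)) ψ)
        * Ff d (fun i => (encK d).symm (lv i)) φ
        * ∏ i, ((HgR d ((encK d).symm (kv i)) ((encK d).symm (lv i)) : ℝ) : ℂ) := by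
  rw [dotProduct]
  have h1 : ∀ rv : Fin m → Fin (dpr d),
      star ((krausPow (EK d) m kv).mulVec ψ) rv * ((krausPow (EK d) m lv).mulVec φ) rv
      = ((starRingEnd ℂ) (Ff d (fun i => (encK d).symm (kv i)) ψ)
          * Ff d (fun i => (encK d).symm (lv i)) φ)
        * ∏ i, (gF d ((encK d).symm (kv i)) (rv i) * gF d ((encK d).symm (lv i)) (rv i)) := by
    intro rv
    simp only [Pi.star_apply, krausPow_mulVec, RCLike.star_def, _root_.map_mul, map_prod,
      conj_gF]
    rw [Finset.prod_mul_distrib]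
    ring
  rw [Finset.sum_congr rfl (fun rv _ => h1 rv), ← Finset.mul_sum]
  congr 1
  have h2 : ∀ i : Fin m, ∑ o : Fin (dpr d),
      gF d ((encK d).symm (kv i)) o * gF d ((encK d).symm (lv i)) o
      = ((HgR d ((encK d).symm (kv i)) ((encK d).symm (lv i)) : ℝ) : ℂ) :=
    fun i => sum_gF d _ _
  rw [← Finset.prod_congr rfl (fun i _ => h2 i)]
  exact (Fintype.prod_sum fun i o =>
    gF d ((encK d).symm (kv i)) o * gF d ((encK d).symm (lv i)) o).symm

lemma part_a (hd : 0 < d) (m : ℕ) (ψ φ : (Fin m → Fin (2 * d)) → ℂ)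
    (hψ : ψ ≠ 0) (hφ : φ ≠ 0) :
    (channelApply (krausPow (EK d) m) (vecMulVec ψ (star ψ)) *
      channelApply (krausPow (EK d) m) (vecMulVec φ (star φ))).trace ≠ 0 := by
  rw [trace_channel_mul]
  have hterm : ∀ kv lv : Fin m → Fin (d * 4),
      (star ((krausPow (EK d) m kv).mulVec ψ) ⬝ᵥ ((krausPow (EK d) m lv).mulVec φ))
        * (star ((krausPow (EK d) m lv).mulVec φ) ⬝ᵥ ((krausPow (EK d) m kv).mulVec ψ))
      = ((Complex.normSq (star ((krausPow (EK d) m kv).mulVec ψ) ⬝ᵥ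
          ((krausPow (EK d) m lv).mulVec φ)) : ℝ) : ℂ) := by
    intro kv lv
    rw [star_dot_conj ((krausPow (EK d) m kv).mulVec ψ) ((krausPow (EK d) m lv).mulVec φ),
      Complex.mul_conj]
  rw [Finset.sum_congr rfl (fun kv _ => Finset.sum_congr rfl (fun lv _ => hterm kv lv))]
  have hcast : ∀ kv : Fin m → Fin (d * 4),
      ∑ lv : Fin m → Fin (d * 4), ((Complex.normSq (star ((krausPow (EK d) m kv).mulVec ψ) ⬝ᵥ
          ((krausPow (EK d) m lv).mulVec φ)) : ℝ) : ℂ)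
      = ((∑ lv : Fin m → Fin (d * 4), Complex.normSq (star ((krausPow (EK d) m kv).mulVec ψ) ⬝ᵥ
          ((krausPow (EK d) m lv).mulVec φ)) : ℝ) : ℂ) := by
    intro kv
    rw [Complex.ofReal_sum]
  rw [Finset.sum_congr rfl (fun kv _ => hcast kv), ← Complex.ofReal_sum]
  rw [Complex.ofReal_ne_zero]
  obtain ⟨qv, rv, hgood, hF1, hF2⟩ := key d m ψ φ hψ hφ
  set kv0 : Fin m → Fin (d * 4) := fun i => encK d (qv i) with hkv0
  set lv0 : Fin m → Fin (d * 4) := fun i => encK d (rv i) with hlv0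
  have hz0 : star ((krausPow (EK d) m kv0).mulVec ψ) ⬝ᵥ ((krausPow (EK d) m lv0).mulVec φ) ≠ 0 := by
    rw [z_formula]
    have e1 : (fun i => (encK d).symm (kv0 i)) = qv := by
      funext i
      rw [hkv0]
      simp
    have e2 : (fun i => (encK d).symm (lv0 i)) = rv := by
      funext i
      rw [hlv0]
      simp
    rw [e1, e2]
    apply mul_ne_zero
    apply mul_ne_zero
    · intro h
      exact hF1 (by simpa using congrArg (starRingEnd ℂ) h)
    · exact hF2
    · apply Finset.prod_ne_zero_iff.mpr
      intro i _
      have : (encK d).symm (kv0 i) = qv i := by rw [hkv0]; simp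
      have : (encK d).symm (lv0 i) = rv i := by rw [hlv0]; simp
      rw [Complex.ofReal_ne_zero]
      have e3 : (encK d).symm (kv0 i) = qv i := by rw [hkv0]; simp
      have e4 : (encK d).symm (lv0 i) = rv i := by rw [hlv0]; simp
      rw [e3, e4]
      exact HgR_ne_zero hd (hgood i)
  have hpos : 0 < ∑ kv : Fin m → Fin (d * 4), ∑ lv : Fin m → Fin (d * 4),
      Complex.normSq (star ((krausPow (EK d) m kv).mulVec ψ) ⬝ᵥ
        ((krausPow (EK d) m lv).mulVec φ)) := by
    apply Finset.sum_pos'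
    · intro kv _
      apply Finset.sum_nonneg
      intro lv _
      exact Complex.normSq_nonneg _
    · refine ⟨kv0, Finset.mem_univ _, ?_⟩
      apply Finset.sum_pos'
      · intro lv _
        exact Complex.normSq_nonneg _
      · exact ⟨lv0, Finset.mem_univ _, Complex.normSq_pos.mpr hz0⟩
  exact ne_of_gt hpos

end Stmt12Proof

/-- for every `d ≥ 2` there is an entanglement-breaking channel `E` on
`ℂ^{2d}` (all Kraus operators of rank ≤ 1) with `α(E^{⊗m}) = 1` for all `m ≥ 1`
(hence `C⁰(E) = 0`), yet `id₂ ⊗ E` admits `d` unit inputs with pairwise orthogonal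
outputs, so `C⁰(id₂ ⊗ E) ≥ log₂ d`. -/
theorem stmt_12 (d : ℕ) (hd : 2 ≤ d) :
    ∃ (d' n : ℕ) (E : Fin n → Matrix (Fin d') (Fin (2 * d)) ℂ),
      (∑ k, (E k)ᴴ * E k = 1) ∧
      (∀ k, (E k).rank ≤ 1) ∧
      (∀ m, 1 ≤ m → ∀ ψ φ : (Fin m → Fin (2 * d)) → ℂ,
        star ψ ⬝ᵥ ψ = 1 → star φ ⬝ᵥ φ = 1 →
        (channelApply (krausPow E m) (vecMulVec ψ (star ψ)) *
          channelApply (krausPow E m) (vecMulVec φ (star φ))).trace ≠ 0) ∧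
      (∃ v : Fin d → (Fin 2 × Fin (2 * d)) → ℂ,
        (∀ i, star (v i) ⬝ᵥ v i = 1) ∧
        ∀ i j, i ≠ j →
          (channelApply (fun k => (1 : Matrix (Fin 2) (Fin 2) ℂ) ⊗ₖ E k)
              (vecMulVec (v i) (star (v i))) *
            channelApply (fun k => (1 : Matrix (Fin 2) (Fin 2) ℂ) ⊗ₖ E k)
              (vecMulVec (v j) (star (v j)))).trace = 0) := by
  have hd0 : 0 < d := by omega
  refine ⟨Stmt12Proof.dpr d, d * 4, Stmt12Proof.EK d,
    Stmt12Proof.completeness d hd0, ?_, ?_, ?_⟩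
  · intro k
    exact Stmt12Proof.rank_EE d _
  · intro m _ ψ φ hψ hφ
    have hψ0 : ψ ≠ 0 := by
      intro h
      rw [h] at hψ
      simp at hψ
    have hφ0 : φ ≠ 0 := by
      intro h
      rw [h] at hφ
      simp at hφ
    exact Stmt12Proof.part_a d hd0 m ψ φ hψ0 hφ0
  · exact ⟨Stmt12Proof.vv d, Stmt12Proof.vv_unit d,
      fun i j hij => Stmt12Proof.part_b d hd0 hij⟩
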